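/- Lower semicontinuity of entropy on countable alphabets: if probability distributions P_m on a countable set converge in total variation to P, then liminf_{m→∞} H(P_m) ≥ H(P). -/
import Mathlib


def IsPMF {α : Type*} (p : α → ℝ) : Prop := (∀ a, 0 ≤ p a) ∧ ∑' a, p a = 1

/-- Shannon entropy in bits, valued in `ℝ≥0∞`. -/
noncomputable def Hen {α : Type*} (p : α → ℝ) : ENNReal :=
  ∑' a, ENNReal.ofReal (-(p a * Real.logb 2 (p a)))

theorem entropy_lower_semicontinuous
    {α : Type*} [Countable α]
    (pm : ℕ → α → ℝ) (p : α → ℝ)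
    (hpm : ∀ m, IsPMF (pm m)) (hp : IsPMF p)
    (hV : Filter.Tendsto (fun m => ∑' a, |pm m a - p a|) Filter.atTop (nhds 0)) :
    Hen p ≤ Filter.liminf (fun m => Hen (pm m)) Filter.atTop := by
  have hsum : ∀ m, Summable (pm m) := fun m => by
    by_contra h
    simpa [tsum_eq_zero_of_not_summable h] using (hpm m).2
  have hsump : Summable p := by
    by_contra h
    simpa [tsum_eq_zero_of_not_summable h] using hp.2
  have hpt : ∀ a, Filter.Tendsto (fun m => pm m a) Filter.atTop (nhds (p a)) := by
    intro a
    rw [tendsto_iff_dist_tendsto_zero]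
    have habs : ∀ m, dist (pm m a) (p a) ≤ ∑' b, |pm m b - p b| := by
      intro m
      rw [Real.dist_eq]
      exact Summable.le_tsum (((hsum m).sub hsump).abs) a (fun b _ => abs_nonneg _)
    exact squeeze_zero (fun m => dist_nonneg) habs hV
  set f : ℝ → ENNReal := fun x => ENNReal.ofReal (Real.negMulLog x / Real.log 2) with hf
  have hfc : Continuous f := ENNReal.continuous_ofReal.comp
    (Real.continuous_negMulLog.div_const _)
  have hHen : ∀ q : α → ℝ, Hen q = ∑' a, f (q a) := by
    intro q; unfold Hen; congr 1; funext a
    congr 1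
    rw [Real.negMulLog, Real.logb]
    ring
  rw [hHen, ENNReal.tsum_eq_iSup_sum]
  apply iSup_le
  intro s
  have hstend : Filter.Tendsto (fun m => ∑ a ∈ s, f (pm m a)) Filter.atTop
      (nhds (∑ a ∈ s, f (p a))) :=
    tendsto_finset_sum _ (fun a _ => (hfc.tendsto _).comp (hpt a))
  rw [← hstend.liminf_eq]
  refine Filter.liminf_le_liminf ?_ (by isBoundedDefault) (by isBoundedDefault)
  filter_upwards with m
  rw [hHen (pm m)]
  exact ENNReal.sum_le_tsum s
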